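/- Suppose there exists an orthogonal array OA(mn, k, 2, 2). Then there exists a set of k mutually orthogonal frequency rectangles of type FR(2m, 2n; 2), i.e., a k-MOFR(2m,2n;2). -/

import Mathlib

/-- An `m × n` frequency rectangle on `q` symbols: each symbol appears exactly
`n/q` times in each row and `m/q` times in each column. -/
def IsFreqRect (m n q : ℕ) (F : Fin m → Fin n → Fin q) : Prop :=
  (∀ i : Fin m, ∀ s : Fin q,
      ((Finset.univ : Finset (Fin n)).filter (fun j => F i j = s)).card * q = n) ∧
  (∀ j : Fin n, ∀ s : Fin q,
      ((Finset.univ : Finset (Fin m)).filter (fun i => F i j = s)).card * q = m)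

/-- Two frequency rectangles are orthogonal: upon superimposition each ordered
pair of symbols appears exactly `m*n/q^2` times. -/
def OrthogonalFR (m n q : ℕ) (F G : Fin m → Fin n → Fin q) : Prop :=
  ∀ a b : Fin q,
    ((Finset.univ : Finset (Fin m × Fin n)).filter
        (fun p => F p.1 p.2 = a ∧ G p.1 p.2 = b)).card * q ^ 2 = m * n

/-- A `k`-MOFR`(m,n;q)`: a family of `k` frequency rectangles, pairwise orthogonal. -/
def IsMOFR (m n q k : ℕ) (F : Fin k → Fin m → Fin n → Fin q) : Prop :=
  (∀ i, IsFreqRect m n q (F i)) ∧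
  (∀ i j, i ≠ j → OrthogonalFR m n q (F i) (F j))

/-- An orthogonal array OA`(N,k,q,t)`. -/
def IsOA (N k q t : ℕ) (A : Fin N → Fin k → Fin q) : Prop :=
  ∀ c : Fin t → Fin k, Function.Injective c →
    ∀ y : Fin t → Fin q,
      ((Finset.univ : Finset (Fin N)).filter (fun r => ∀ s, A r (c s) = y s)).card * q ^ t = N

/-- A family of frequency rectangles is `t`-orthogonal: superimposing any `t` of
them, each ordered `t`-tuple of symbols occurs exactly `m*n/q^t` times. -/
def IsTOrthogonal (m n q t k : ℕ) (F : Fin k → Fin m → Fin n → Fin q) : Prop :=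
  ∀ c : Fin t → Fin k, Function.Injective c →
    ∀ y : Fin t → Fin q,
      ((Finset.univ : Finset (Fin m × Fin n)).filter
          (fun p => ∀ s, F (c s) p.1 p.2 = y s)).card * q ^ t = m * n

/-- A Hadamard matrix of order `n` (entries `±1`, `H Hᵀ = n I`). -/
def IsHadamard (n : ℕ) (H : Matrix (Fin n) (Fin n) ℤ) : Prop :=
  (∀ i j, H i j = 1 ∨ H i j = -1) ∧
  H * H.transpose = (n : ℤ) • (1 : Matrix (Fin n) (Fin n) ℤ)

lemma card_filter_comp_equiv {α β : Type*} [Fintype α] [Fintype β] (e : α ≃ β)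
    (p : β → Prop) [DecidablePred p] [DecidablePred (fun a => p (e a))] :
    (Finset.univ.filter p).card = (Finset.univ.filter (fun a => p (e a))).card := by
  refine (Finset.card_equiv e ?_).symm
  intro a; simp

lemma aux_row {n : ℕ} (g : Fin n → Fin 2) (s : Fin 2) :
    (Finset.univ.filter (fun p : Fin 2 × Fin n => g p.2 + p.1 = s)).card = n := by
  have key1 : ∀ u s : Fin 2, u + (s - u) = s := by decide
  have key2 : ∀ u ε s : Fin 2, u + ε = s → s - u = ε := by decide
  have : (Finset.univ.filter (fun p : Fin 2 × Fin n => g p.2 + p.1 = s)).card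
      = (Finset.univ : Finset (Fin n)).card := by
    refine Finset.card_nbij' (fun p => p.2) (fun j => (s - g j, j)) ?_ ?_ ?_ ?_
    · intro a _; simp
    · intro j _; simp [key1]
    · intro p hp
      simp only [Finset.mem_coe, Finset.mem_filter] at hp
      exact Prod.ext (key2 _ _ _ hp.2) rfl
    · intro j _; rfl
  simpa using this

lemma aux_orth {N : ℕ} (g h : Fin N → Fin 2) (a b : Fin 2)
    (H : ∀ y z : Fin 2,
      ((Finset.univ.filter (fun r => g r = y ∧ h r = z)).card) * 4 = N) :
    ((Finset.univ.filter (fun p : (Fin 2 × Fin 2) × Fin N =>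
        g p.2 + p.1.1 + p.1.2 = a ∧ h p.2 + p.1.1 + p.1.2 = b)).card) * 4 = 4 * N := by
  set D : Finset (Fin N) := Finset.univ.filter (fun r => h r = g r + b - a) with hDdef
  have hD : D.card * 2 = N := by
    have key : ∀ u v a b : Fin 2,
        (v = u + b - a ↔ (u = 0 ∧ v = 0 + b - a) ∨ (u = 1 ∧ v = 1 + b - a)) := by decide
    have hsplit : D = (Finset.univ.filter (fun r => g r = 0 ∧ h r = 0 + b - a))
        ∪ (Finset.univ.filter (fun r => g r = 1 ∧ h r = 1 + b - a)) := by
      ext r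
      simp only [hDdef, Finset.mem_filter, Finset.mem_union, Finset.mem_univ, true_and]
      exact key (g r) (h r) a b
    have hdisj : Disjoint (Finset.univ.filter (fun r => g r = 0 ∧ h r = 0 + b - a))
        (Finset.univ.filter (fun r => g r = 1 ∧ h r = 1 + b - a)) := by
      rw [Finset.disjoint_left]
      intro r h1 h2
      simp only [Finset.mem_filter] at h1 h2
      rw [h1.2.1] at h2
      exact absurd h2.2.1 (by decide)
    have h0 := H 0 (0 + b - a)
    have h1 := H 1 (1 + b - a)
    rw [hsplit, Finset.card_union_of_disjoint hdisj]
    omega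
  have key1 : ∀ u v ε δ a b : Fin 2, u + ε + δ = a → v + ε + δ = b → v = u + b - a := by decide
  have key2 : ∀ u v ε a b : Fin 2, v = u + b - a →
      (u + ε + (a - u - ε) = a ∧ v + ε + (a - u - ε) = b) := by decide
  have key3 : ∀ u ε δ a : Fin 2, u + ε + δ = a → a - u - ε = δ := by decide
  have hcard : ((Finset.univ.filter (fun p : (Fin 2 × Fin 2) × Fin N =>
        g p.2 + p.1.1 + p.1.2 = a ∧ h p.2 + p.1.1 + p.1.2 = b)).card)
      = ((Finset.univ : Finset (Fin 2)) ×ˢ D).card := by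
    refine Finset.card_nbij' (fun p => (p.1.1, p.2))
      (fun q => ((q.1, a - g q.2 - q.1), q.2)) ?_ ?_ ?_ ?_
    · intro p hp
      simp only [Finset.mem_coe, Finset.mem_filter, Finset.mem_univ, true_and] at hp
      simp only [Finset.mem_coe, Finset.mem_product, Finset.mem_univ, true_and, hDdef, Finset.mem_filter]
      exact key1 _ _ _ _ _ _ hp.1 hp.2
    · intro q hq
      simp only [Finset.mem_coe, Finset.mem_product, Finset.mem_univ, true_and, hDdef, Finset.mem_filter] at hq
      simp only [Finset.mem_coe, Finset.mem_filter, Finset.mem_univ, true_and]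
      exact key2 _ _ _ _ _ hq
    · intro p hp
      simp only [Finset.mem_coe, Finset.mem_filter, Finset.mem_univ, true_and] at hp
      exact Prod.ext (Prod.ext rfl (key3 _ _ _ _ hp.1)) rfl
    · intro q _; rfl
  rw [hcard, Finset.card_product]
  simp only [Finset.card_univ, Fintype.card_fin]
  omega

def mofrE (m n : ℕ) : (Fin 2 × Fin 2) × Fin (m * n) ≃ Fin (2 * m) × Fin (2 * n) :=
  ((Equiv.refl (Fin 2 × Fin 2)).prodCongr finProdFinEquiv.symm).trans
    ((Equiv.prodProdProdComm (Fin 2) (Fin 2) (Fin m) (Fin n)).trans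
      (finProdFinEquiv.prodCongr finProdFinEquiv))

set_option maxHeartbeats 1000000 in
set_option synthInstance.maxHeartbeats 200000 in
theorem oa_to_mofr (m n k : ℕ)
    (h : ∃ A : Fin (m * n) → Fin k → Fin 2, IsOA (m * n) k 2 2 A) :
    ∃ F : Fin k → Fin (2 * m) → Fin (2 * n) → Fin 2,
      IsMOFR (2 * m) (2 * n) 2 k F := by
  obtain ⟨A, hA⟩ := h
  refine ⟨fun c I J =>
    A (finProdFinEquiv ((finProdFinEquiv.symm I).2, (finProdFinEquiv.symm J).2)) c
      + (finProdFinEquiv.symm I).1 + (finProdFinEquiv.symm J).1, ?_, ?_⟩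
  · intro c
    constructor
    · intro I s
      rw [card_filter_comp_equiv (finProdFinEquiv : Fin 2 × Fin n ≃ Fin (2 * n))]
      simp only [Equiv.symm_apply_apply]
      rw [aux_row (fun j => A (finProdFinEquiv ((finProdFinEquiv.symm I).2, j)) c
        + (finProdFinEquiv.symm I).1) s]
      ring
    · intro J s
      rw [card_filter_comp_equiv (finProdFinEquiv : Fin 2 × Fin m ≃ Fin (2 * m))]
      simp only [Equiv.symm_apply_apply]
      have hcomm : ∀ x ε : Fin 2,
          x + ε + (finProdFinEquiv.symm J).1 = (x + (finProdFinEquiv.symm J).1) + ε := by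
        intro x ε; exact add_right_comm x ε _
      simp only [hcomm]
      rw [aux_row (fun i => A (finProdFinEquiv (i, (finProdFinEquiv.symm J).2)) c
        + (finProdFinEquiv.symm J).1) s]
      ring
  · intro ci cj hne a b
    rw [card_filter_comp_equiv (mofrE m n)]
    have hpred : ∀ p : (Fin 2 × Fin 2) × Fin (m * n),
        ((fun (q : Fin (2*m) × Fin (2*n)) =>
          (A (finProdFinEquiv ((finProdFinEquiv.symm q.1).2, (finProdFinEquiv.symm q.2).2)) ci
            + (finProdFinEquiv.symm q.1).1 + (finProdFinEquiv.symm q.2).1 = a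
          ∧ A (finProdFinEquiv ((finProdFinEquiv.symm q.1).2, (finProdFinEquiv.symm q.2).2)) cj
            + (finProdFinEquiv.symm q.1).1 + (finProdFinEquiv.symm q.2).1 = b)) (mofrE m n p))
        ↔ (A p.2 ci + p.1.1 + p.1.2 = a ∧ A p.2 cj + p.1.1 + p.1.2 = b) := by
      rintro ⟨⟨ε, δ⟩, r⟩
      have hr : finProdFinEquiv (r.divNat, r.modNat) = r := finProdFinEquiv.apply_symm_apply r
      simp [mofrE, Equiv.prodProdProdComm, hr]
    rw [Finset.filter_congr (fun p _ => hpred p)]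
    have hOA : ∀ y z : Fin 2,
        ((Finset.univ.filter (fun r => A r ci = y ∧ A r cj = z)).card) * 4 = m * n := by
      intro y z
      have hinj : Function.Injective (![ci, cj] : Fin 2 → Fin k) := by
        intro s t hst
        fin_cases s <;> fin_cases t
        · rfl
        · simp only [Matrix.cons_val_zero, Matrix.cons_val_one, Matrix.head_cons] at hst
          exact (hne hst).elim
        · simp only [Matrix.cons_val_zero, Matrix.cons_val_one, Matrix.head_cons] at hst
          exact (hne hst.symm).elim
        · rfl
      have := hA ![ci, cj] hinj ![y, z]
      simp only [Fin.forall_fin_two] at this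
      simpa using this
    have := aux_orth (fun r => A r ci) (fun r => A r cj) a b hOA
    have h4 : 2 * m * (2 * n) = 4 * (m * n) := by ring
    rw [show (2:ℕ)^2 = 4 from rfl, h4]
    exact this
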